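/- Let ι be a countable index set, d : ι → ℝ a function with d i ≥ 0 for all i, and let c > 0 and t > 0 be real numbers. Assume that for every r ≥ 0 the set {i ∈ ι : d i ≤ r} is finite. Then, as an identity of extended nonnegative reals, ∑_{i ∈ ι} exp(−c·(d i)²/t) = c · ∫₀^∞ N(√(r·t)) · exp(−c·r) dr, where N(s) denotes the (finite) cardinality of {i ∈ ι : d i ≤ s} and the sum and integral are taken in [0, ∞]. -/

import Mathlib

open MeasureTheory

lemma lintegral_exp_neg_mul_Ioi {c : ℝ} (hc : 0 < c) (a : ℝ) :
    ∫⁻ r in Set.Ioi a, ENNReal.ofReal (Real.exp (-c * r)) =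
      ENNReal.ofReal (Real.exp (-c * a) / c) := by
  rw [← ofReal_integral_eq_lintegral_ofReal]
  · congr 1
    have : (∫ x in Set.Ioi a, Real.exp (-c * x)) =
        (∫ x in Set.Ioi a, Real.exp (-(c * x))) := by simp [neg_mul]
    rw [this]
    have := integral_comp_mul_left_Ioi (fun x => Real.exp (-x)) a hc
    simp only [smul_eq_mul] at this
    rw [this, integral_exp_neg_Ioi]
    rw [neg_mul, eq_div_iff hc.ne', mul_comm, ← mul_assoc, mul_inv_cancel₀ hc.ne', one_mul]
  · exact exp_neg_integrableOn_Ioi a hc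
  · exact Filter.Eventually.of_forall fun x => (Real.exp_pos _).le

/-- Layer-cake identity: for `d : ι → ℝ` nonnegative with finite sublevel sets, `c, t > 0`,
`∑ᵢ exp (−c·(d i)²/t) = c · ∫₀^∞ N(√(r·t)) · exp (−c·r) dr` in `[0,∞]`, where `N(s)` is the
cardinality of `{i | d i ≤ s}`. -/
theorem tsum_exp_eq_lintegral_counting
    {ι : Type*} [Countable ι] (d : ι → ℝ) (hd : ∀ i, 0 ≤ d i)
    (c t : ℝ) (hc : 0 < c) (ht : 0 < t)
    (hfin : ∀ r : ℝ, 0 ≤ r → {i : ι | d i ≤ r}.Finite) :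
    ∑' i : ι, ENNReal.ofReal (Real.exp (-c * (d i) ^ 2 / t)) =
      ENNReal.ofReal c *
        ∫⁻ r in Set.Ioi (0 : ℝ),
          ({i : ι | d i ≤ Real.sqrt (r * t)}.ncard : ENNReal) *
            ENNReal.ofReal (Real.exp (-c * r)) := by
  set a : ι → ℝ := fun i => (d i) ^ 2 / t with ha
  have ha0 : ∀ i, 0 ≤ a i := fun i => div_nonneg (sq_nonneg _) ht.le
  -- pointwise identity of the integrand on Ioi 0
  have hpt : ∀ r ∈ Set.Ioi (0 : ℝ),
      ({i : ι | d i ≤ Real.sqrt (r * t)}.ncard : ENNReal) *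
          ENNReal.ofReal (Real.exp (-c * r)) =
        ∑' i : ι, Set.indicator (Set.Ici (a i)) (fun _ => (1 : ENNReal)) r *
          ENNReal.ofReal (Real.exp (-c * r)) := by
    intro r hr
    rw [ENNReal.tsum_mul_right]
    congr 1
    have hrt : 0 ≤ r * t := mul_nonneg (le_of_lt hr) ht.le
    have hset : {i : ι | d i ≤ Real.sqrt (r * t)} = {i : ι | a i ≤ r} := by
      ext i
      simp only [Set.mem_setOf_eq, ha]
      rw [Real.le_sqrt (hd i) hrt, div_le_iff₀ ht]
    have hS : {i : ι | d i ≤ Real.sqrt (r * t)}.Finite :=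
      hfin _ (Real.sqrt_nonneg _)
    have hS' : {i : ι | a i ≤ r}.Finite := hset ▸ hS
    have h1 : ∀ i : ι, Set.indicator (Set.Ici (a i)) (fun _ => (1 : ENNReal)) r =
        Set.indicator {i : ι | a i ≤ r} (fun _ => (1 : ENNReal)) i := by
      intro i
      simp only [Set.indicator_apply, Set.mem_Ici, Set.mem_setOf_eq]
    rw [hset]
    calc (({i : ι | a i ≤ r}.ncard : ℕ) : ENNReal)
        = (hS'.toFinset.card : ENNReal) := by
          rw [Set.ncard_eq_toFinset_card _ hS']
      _ = ∑ i ∈ hS'.toFinset, (1 : ENNReal) := by simp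
      _ = ∑' i : ι, Set.indicator {i : ι | a i ≤ r} (fun _ => (1 : ENNReal)) i := by
          rw [tsum_eq_sum (s := hS'.toFinset)
            (fun i hi => Set.indicator_of_notMem (by simpa using hi) _)]
          refine Finset.sum_congr rfl fun i hi => ?_
          rw [Set.indicator_of_mem (by simpa using hi)]
      _ = ∑' i : ι, Set.indicator (Set.Ici (a i)) (fun _ => (1 : ENNReal)) r := by
          exact tsum_congr fun i => (h1 i).symm
  rw [setLIntegral_congr_fun measurableSet_Ioi (fun r hr => hpt r hr)]
  rw [lintegral_tsum (f := fun (i : ι) (r : ℝ) =>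
    Set.indicator (Set.Ici (a i)) (fun _ => (1 : ENNReal)) r *
      ENNReal.ofReal (Real.exp (-c * r)))
    (fun i => ((measurable_one.indicator measurableSet_Ici).mul (by fun_prop)).aemeasurable)]
  rw [← ENNReal.tsum_mul_left]
  refine tsum_congr fun i => ?_
  have hind : ∀ r : ℝ, Set.indicator (Set.Ici (a i)) (fun _ => (1 : ENNReal)) r *
      ENNReal.ofReal (Real.exp (-c * r)) =
      Set.indicator (Set.Ici (a i)) (fun r => ENNReal.ofReal (Real.exp (-c * r))) r := by
    intro r
    by_cases h : r ∈ Set.Ici (a i)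
    · rw [Set.indicator_of_mem h, Set.indicator_of_mem h, one_mul]
    · rw [Set.indicator_of_notMem h, Set.indicator_of_notMem h, zero_mul]
  calc ENNReal.ofReal (Real.exp (-c * (d i) ^ 2 / t))
      = ENNReal.ofReal c * ENNReal.ofReal (Real.exp (-c * a i) / c) := by
        rw [← ENNReal.ofReal_mul hc.le, mul_div_cancel₀ _ hc.ne']
        congr 2
        rw [ha]; ring
    _ = ENNReal.ofReal c * ∫⁻ r in Set.Ioi (a i),
          ENNReal.ofReal (Real.exp (-c * r)) := by
        rw [lintegral_exp_neg_mul_Ioi hc]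
    _ = ENNReal.ofReal c * ∫⁻ r in Set.Ioi (0 : ℝ),
          Set.indicator (Set.Ici (a i)) (fun _ => (1 : ENNReal)) r *
            ENNReal.ofReal (Real.exp (-c * r)) := by
        congr 1
        simp only [hind]
        rw [lintegral_indicator measurableSet_Ici _]
        have hae : (Set.Ioi (0 : ℝ) ∩ Set.Ici (a i) : Set ℝ) =ᵐ[volume] Set.Ioi (a i) := by
          have hnull : volume ({a i} : Set ℝ) = 0 := measure_singleton _
          refine MeasureTheory.ae_eq_set.2
            ⟨measure_mono_null ?_ hnull, measure_mono_null ?_ hnull⟩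
          · intro x hx
            simp only [Set.mem_diff, Set.mem_inter_iff, Set.mem_Ioi, Set.mem_Ici,
              not_lt] at hx
            exact le_antisymm hx.2 hx.1.2
          · intro x hx
            simp only [Set.mem_diff, Set.mem_inter_iff, Set.mem_Ioi, Set.mem_Ici,
              not_and, not_le] at hx
            exact absurd (hx.2 (lt_of_le_of_lt (ha0 i) hx.1)) (not_lt.2 hx.1.le)
        rw [Measure.restrict_restrict measurableSet_Ici, Set.inter_comm,
          setLIntegral_congr hae]
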